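/- Corollary 3 (threshold bound from a non-overlapping BLO), asymptotic form: let K > 0 and 0 < α ≤ 1 be real constants and p ∈ [0, 1/2). For each n, let 𝓑ₙ be a finite family of pairwise disjoint finite subsets of Fin n, each of cardinality at least K·n^α. Then there exists c > 0 such that for all sufficiently large n, the probability (under the random subset E of Fin n in which each element is included independently with probability p) of the event { ∃ nonempty sub-family S ⊆ 𝓑ₙ with 2·|E ∩ (⋃_{L∈S} L)| ≥ |⋃_{L∈S} L| } is at most exp(−c·n^α). -/

import Mathlib

open MeasureTheory
open scoped ENNReal

/-- The product over `Fin n` of the Bernoulli measure on `Bool` assigning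
probability `p` to `true` (for `0 ≤ p ≤ 1`, where the clamping by `1` is inert). -/
noncomputable def productBernoulli (n : ℕ) (p : ℝ) : Measure (Fin n → Bool) :=
  Measure.pi fun _ =>
    (PMF.bernoulli (min (Real.toNNReal p) 1) (min_le_right _ _)).toMeasure

/-- The random error subset of `Fin n` determined by a sample `ω : Fin n → Bool`. -/
def errSet {n : ℕ} (ω : Fin n → Bool) : Finset (Fin n) :=
  Finset.univ.filter fun i => ω i = true


lemma cylinder_measure {n : ℕ} {p : ℝ} (hp0 : 0 ≤ p) (hp1 : p ≤ 1)
    (T S : Finset (Fin n)) (hTS : Disjoint T S) :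
    productBernoulli n p {ω | (∀ i ∈ T, ω i = true) ∧ ∀ i ∈ S, ω i = false}
      = ENNReal.ofReal p ^ T.card * ENNReal.ofReal (1 - p) ^ S.card := by
  have hmin : min (Real.toNNReal p) 1 = Real.toNNReal p :=
    min_eq_left (Real.toNNReal_le_one.2 hp1)
  set ν := (PMF.bernoulli (min (Real.toNNReal p) 1) (min_le_right _ _)).toMeasure with hν
  have hνt : ν {true} = ENNReal.ofReal p := by
    rw [hν, PMF.toMeasure_apply_singleton _ _ (measurableSet_singleton _),
      PMF.bernoulli_apply, hmin]
    rfl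
  have hνf : ν {false} = ENNReal.ofReal (1 - p) := by
    rw [hν, PMF.toMeasure_apply_singleton _ _ (measurableSet_singleton _),
      PMF.bernoulli_apply, hmin, ENNReal.ofReal_sub _ hp0, ENNReal.ofReal_one]
    rfl
  have hνu : ν Set.univ = 1 := measure_univ
  set F : Fin n → Set Bool := fun i =>
    if i ∈ T then {true} else if i ∈ S then {false} else Set.univ with hF
  have hset : {ω : Fin n → Bool | (∀ i ∈ T, ω i = true) ∧ ∀ i ∈ S, ω i = false}
      = Set.pi Set.univ F := by
    ext ω
    simp only [Set.mem_setOf_eq, Set.mem_pi, Set.mem_univ, true_implies, hF]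
    constructor
    · rintro ⟨h1, h2⟩ i
      by_cases hiT : i ∈ T
      · simp [hiT, h1 i hiT]
      · by_cases hiS : i ∈ S
        · simp [hiT, hiS, h2 i hiS]
        · simp [hiT, hiS]
    · intro h
      constructor
      · intro i hi
        have := h i
        simpa [hi] using this
      · intro i hi
        have := h i
        have hiT : i ∉ T := fun hc => (Finset.disjoint_left.1 hTS) hc hi
        simpa [hi, hiT] using this
  rw [productBernoulli, hset, Measure.pi_pi]
  have : ∀ i, ν (F i) = if i ∈ T then ENNReal.ofReal p
      else if i ∈ S then ENNReal.ofReal (1 - p) else 1 := by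
    intro i
    by_cases hiT : i ∈ T
    · simp [hF, hiT, hνt]
    · by_cases hiS : i ∈ S
      · simp [hF, hiT, hiS, hνf]
      · have hu : ({false, true} : Set Bool) = Set.univ := by
          ext b; cases b <;> simp
        simp only [hF, hiT, hiS, if_false, if_neg hiT]
        rw [hνu]
  change ∏ i, ν (F i) = _
  simp_rw [this]
  rw [← Finset.prod_subset (Finset.subset_univ (T ∪ S))
    (by intro i _ hi
        simp only [Finset.mem_union, not_or] at hi
        simp [hi.1, hi.2]),
    Finset.prod_union (Finset.disjoint_left.2 fun a ha hb => Finset.disjoint_left.1 hTS ha hb)]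
  rw [Finset.prod_congr rfl (fun i hi => by simp [hi] : ∀ i ∈ T, _ = ENNReal.ofReal p),
    Finset.prod_congr rfl (fun i hi =>
      by simp [hi, Finset.disjoint_right.1 hTS hi] : ∀ i ∈ S, _ = ENNReal.ofReal (1 - p)),
    Finset.prod_const, Finset.prod_const]


lemma real_chernoff {p : ℝ} (hp0 : 0 ≤ p) (hp : p ≤ 1/2) {k m : ℕ}
    (hmk : m ≤ 2 * k) (hkm : k ≤ m) :
    p ^ k * (1 - p) ^ (m - k) ≤ Real.sqrt (p * (1 - p)) ^ m := by
  have h1p : 0 ≤ 1 - p := by linarith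
  have hle : p ≤ 1 - p := by linarith
  have hL : 0 ≤ p ^ k * (1 - p) ^ (m - k) := by positivity
  have hsq : (p ^ k * (1 - p) ^ (m - k)) ^ 2 ≤ (Real.sqrt (p * (1 - p)) ^ m) ^ 2 := by
    have hs : (Real.sqrt (p * (1 - p)) ^ m) ^ 2 = p ^ m * (1 - p) ^ m := by
      rw [← pow_mul, pow_mul', Real.sq_sqrt (by positivity), mul_pow]
    rw [hs, mul_pow, ← pow_mul, ← pow_mul]
    calc p ^ (k * 2) * (1 - p) ^ ((m - k) * 2)
        = p ^ m * (p ^ (k * 2 - m) * (1 - p) ^ ((m - k) * 2)) := by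
          rw [← mul_assoc, ← pow_add]
          congr 2
          omega
      _ ≤ p ^ m * ((1 - p) ^ (k * 2 - m) * (1 - p) ^ ((m - k) * 2)) := by
          gcongr
      _ = p ^ m * (1 - p) ^ m := by
          rw [← pow_add]
          congr 2
          omega
  calc p ^ k * (1 - p) ^ (m - k) = Real.sqrt ((p ^ k * (1 - p) ^ (m - k)) ^ 2) := by
        rw [Real.sqrt_sq hL]
    _ ≤ Real.sqrt ((Real.sqrt (p * (1 - p)) ^ m) ^ 2) := Real.sqrt_le_sqrt hsq
    _ = Real.sqrt (p * (1 - p)) ^ m := Real.sqrt_sq (by positivity)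

lemma bad_measure {n : ℕ} {p : ℝ} (hp0 : 0 ≤ p) (hp : p ≤ 1/2) (L : Finset (Fin n)) :
    productBernoulli n p {ω | L.card ≤ 2 * (errSet ω ∩ L).card}
      ≤ ENNReal.ofReal ((2 * Real.sqrt (p * (1 - p))) ^ L.card) := by
  set s := Real.sqrt (p * (1 - p)) with hs
  have hs0 : 0 ≤ s := Real.sqrt_nonneg _
  set 𝒯 := L.powerset.filter (fun T => L.card ≤ 2 * T.card) with h𝒯
  have hsub : {ω : Fin n → Bool | L.card ≤ 2 * (errSet ω ∩ L).card}
      ⊆ ⋃ T ∈ 𝒯, {ω | (∀ i ∈ T, ω i = true) ∧ ∀ i ∈ L \ T, ω i = false} := by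
    intro ω hω
    have hmem : errSet ω ∩ L ∈ 𝒯 := by
      simp only [h𝒯, Finset.mem_filter, Finset.mem_powerset]
      exact ⟨Finset.inter_subset_right, hω⟩
    refine Set.mem_biUnion hmem ⟨?_, ?_⟩
    · intro i hi
      exact (Finset.mem_filter.1 (Finset.mem_inter.1 hi).1).2
    · intro i hi
      rcases Finset.mem_sdiff.1 hi with ⟨hiL, hiT⟩
      cases h : ω i with
      | false => rfl
      | true =>
        exact absurd (Finset.mem_inter.2 ⟨Finset.mem_filter.2 ⟨Finset.mem_univ i, h⟩, hiL⟩) hiT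
  calc productBernoulli n p {ω | L.card ≤ 2 * (errSet ω ∩ L).card}
      ≤ productBernoulli n p
          (⋃ T ∈ 𝒯, {ω | (∀ i ∈ T, ω i = true) ∧ ∀ i ∈ L \ T, ω i = false}) :=
        measure_mono hsub
    _ ≤ ∑ T ∈ 𝒯, productBernoulli n p
          {ω | (∀ i ∈ T, ω i = true) ∧ ∀ i ∈ L \ T, ω i = false} :=
        measure_biUnion_finset_le 𝒯 _
    _ ≤ ∑ _T ∈ 𝒯, ENNReal.ofReal (s ^ L.card) := by
        refine Finset.sum_le_sum fun T hT => ?_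
        rcases Finset.mem_filter.1 hT with ⟨hTpow, hTcard⟩
        have hTL : T ⊆ L := Finset.mem_powerset.1 hTpow
        rw [cylinder_measure hp0 (by linarith) T (L \ T) Finset.disjoint_sdiff,
          Finset.card_sdiff_of_subset hTL,
          ← ENNReal.ofReal_pow hp0, ← ENNReal.ofReal_pow (by linarith : (0:ℝ) ≤ 1 - p),
          ← ENNReal.ofReal_mul (by positivity)]
        exact ENNReal.ofReal_le_ofReal
          (real_chernoff hp0 hp hTcard (Finset.card_le_card hTL))
    _ = (𝒯.card : ℝ≥0∞) * ENNReal.ofReal (s ^ L.card) := by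
        rw [Finset.sum_const, nsmul_eq_mul]
    _ ≤ (2 ^ L.card : ℝ≥0∞) * ENNReal.ofReal (s ^ L.card) := by
        gcongr
        have : 𝒯.card ≤ 2 ^ L.card := by
          calc 𝒯.card ≤ L.powerset.card := Finset.card_filter_le _ _
            _ = 2 ^ L.card := Finset.card_powerset L
        exact_mod_cast Nat.cast_le.2 this
    _ = ENNReal.ofReal ((2 * s) ^ L.card) := by
        rw [mul_pow, ENNReal.ofReal_mul (by positivity : (0:ℝ) ≤ 2 ^ L.card),
          ENNReal.ofReal_pow hs0, ENNReal.ofReal_pow (by norm_num : (0:ℝ) ≤ 2),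
          ENNReal.ofReal_ofNat]


/-- Corollary 3 (threshold bound from a non-overlapping BLO), asymptotic form: if
each `𝓑ₙ` is a pairwise disjoint family of subsets of `Fin n` with each member of
cardinality at least `K·n^α`, then for some `c > 0` the probability that some
nonempty subfamily's union has at least half of its support in error is eventually
at most `exp(−c·n^α)`. -/
theorem nonoverlapping_BLO_threshold (K α p : ℝ)
    (hK : 0 < K) (hα0 : 0 < α) (hα1 : α ≤ 1) (hp0 : 0 ≤ p) (hp : p < 1 / 2)
    (𝓑 : (n : ℕ) → Finset (Finset (Fin n)))
    (hdisj : ∀ n : ℕ, ((𝓑 n : Set (Finset (Fin n)))).Pairwise fun A B => Disjoint A B)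
    (hcard : ∀ n : ℕ, ∀ L ∈ 𝓑 n, K * (n : ℝ) ^ α ≤ (L.card : ℝ)) :
    ∃ c > 0, ∀ᶠ n : ℕ in Filter.atTop,
      productBernoulli n p
          {ω | ∃ S ⊆ 𝓑 n, S.Nonempty ∧
            (S.biUnion id).card ≤ 2 * (errSet ω ∩ S.biUnion id).card}
        ≤ ENNReal.ofReal (Real.exp (-c * (n : ℝ) ^ α)) := by
  set s := Real.sqrt (p * (1 - p)) with hsdef
  have hs0 : 0 ≤ s := Real.sqrt_nonneg _
  have h2s : 2 * s < 1 := by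
    have hq : p * (1 - p) < 1 / 4 := by nlinarith [sq_nonneg (1/2 - p)]
    have : s < 1 / 2 := by
      rw [hsdef]
      rw [show (1:ℝ)/2 = Real.sqrt ((1/2)^2) by
        rw [Real.sqrt_sq]; norm_num]
      exact Real.sqrt_lt_sqrt (by nlinarith) (by nlinarith)
    linarith
  set r := max (2 * s) (Real.exp (-1)) with hrdef
  have hr0 : 0 < r := lt_of_lt_of_le (Real.exp_pos _) (le_max_right _ _)
  have hr1 : r < 1 := max_lt h2s (by
    rw [show (1:ℝ) = Real.exp 0 by simp]
    exact Real.exp_lt_exp.2 (by norm_num))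
  have hlogr : Real.log r < 0 := Real.log_neg hr0 hr1
  set c := K * (-Real.log r) / 2 with hcdef
  have hc0 : 0 < c := by
    apply div_pos _ (by norm_num)
    exact mul_pos hK (by linarith)
  refine ⟨c, hc0, ?_⟩
  have hlog : ∀ᶠ n : ℕ in Filter.atTop, Real.log n ≤ c * (n : ℝ) ^ α := by
    have h1 : ∀ᶠ x : ℝ in Filter.atTop, ‖Real.log x‖ ≤ c * ‖x ^ α‖ :=
      (isLittleO_log_rpow_atTop hα0).def hc0
    filter_upwards [(tendsto_natCast_atTop_atTop (R := ℝ)).eventually h1,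
      Filter.eventually_ge_atTop 1] with n hn hn1
    have hn0 : (0:ℝ) ≤ (n:ℝ) := by positivity
    calc Real.log n ≤ ‖Real.log n‖ := le_abs_self _
      _ ≤ c * ‖(n:ℝ) ^ α‖ := hn
      _ = c * (n:ℝ) ^ α := by rw [Real.norm_eq_abs, abs_of_nonneg (Real.rpow_nonneg hn0 _)]
  filter_upwards [hlog, Filter.eventually_ge_atTop 1] with n hlogn hn1
  have hn0 : (0:ℝ) < (n:ℝ) := by exact_mod_cast hn1
  have hnα : (1:ℝ) ≤ (n:ℝ) ^ α := Real.one_le_rpow (by exact_mod_cast hn1) hα0.le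
  -- every L ∈ 𝓑 n is nonempty... card positive
  have hLpos : ∀ L ∈ 𝓑 n, 1 ≤ L.card := by
    intro L hL
    have := hcard n L hL
    have : (0:ℝ) < (L.card : ℝ) := lt_of_lt_of_le (by nlinarith) this
    have h' : 0 < L.card := by exact_mod_cast this
    omega
  have hBcard : (𝓑 n).card ≤ n := by
    have h1 : (𝓑 n).card ≤ ∑ L ∈ 𝓑 n, L.card := by
      calc (𝓑 n).card = ∑ _L ∈ 𝓑 n, 1 := by simp
        _ ≤ ∑ L ∈ 𝓑 n, L.card := Finset.sum_le_sum hLpos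
    have h2 : ∑ L ∈ 𝓑 n, L.card = ((𝓑 n).biUnion id).card :=
      (Finset.card_biUnion fun x hx y hy hxy => hdisj n hx hy hxy).symm
    calc (𝓑 n).card ≤ ((𝓑 n).biUnion id).card := h2 ▸ h1
      _ ≤ (Finset.univ : Finset (Fin n)).card := Finset.card_le_card (Finset.subset_univ _)
      _ = n := by simp
  have hincl : {ω : Fin n → Bool | ∃ S ⊆ 𝓑 n, S.Nonempty ∧
        (S.biUnion id).card ≤ 2 * (errSet ω ∩ S.biUnion id).card}
      ⊆ ⋃ L ∈ 𝓑 n, {ω | L.card ≤ 2 * (errSet ω ∩ L).card} := by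
    rintro ω ⟨S, hS, hSne, hle⟩
    have hpair : ∀ x ∈ S, ∀ y ∈ S, x ≠ y → Disjoint (id x) (id y) :=
      fun x hx y hy hxy => hdisj n (hS hx) (hS hy) hxy
    by_contra hc
    simp only [Set.mem_iUnion, Set.mem_setOf_eq, not_exists] at hc
    have hlt : ∀ L ∈ S, 2 * (errSet ω ∩ L).card + 1 ≤ L.card := by
      intro L hL
      have h1 := hc L (hS hL)
      omega
    have hU : (S.biUnion id).card = ∑ L ∈ S, L.card := Finset.card_biUnion hpair
    have hI : errSet ω ∩ S.biUnion id = S.biUnion fun L => errSet ω ∩ L := by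
      ext i
      simp only [Finset.mem_inter, Finset.mem_biUnion, id]
      tauto
    have hIc : (errSet ω ∩ S.biUnion id).card = ∑ L ∈ S, (errSet ω ∩ L).card := by
      rw [hI]
      exact Finset.card_biUnion fun x hx y hy hxy =>
        (hpair x hx y hy hxy).mono Finset.inter_subset_right Finset.inter_subset_right
    have hScard : 1 ≤ S.card := hSne.card_pos
    have hkey : 2 * (∑ L ∈ S, (errSet ω ∩ L).card) + S.card ≤ ∑ L ∈ S, L.card := by
      calc 2 * (∑ L ∈ S, (errSet ω ∩ L).card) + S.card
          = ∑ L ∈ S, (2 * (errSet ω ∩ L).card + 1) := by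
            rw [Finset.sum_add_distrib, Finset.sum_const, Finset.mul_sum,
              smul_eq_mul, mul_one]
        _ ≤ ∑ L ∈ S, L.card := Finset.sum_le_sum hlt
    rw [hU, hIc] at hle
    omega
  calc productBernoulli n p
        {ω | ∃ S ⊆ 𝓑 n, S.Nonempty ∧
          (S.biUnion id).card ≤ 2 * (errSet ω ∩ S.biUnion id).card}
      ≤ productBernoulli n p
          (⋃ L ∈ 𝓑 n, {ω | L.card ≤ 2 * (errSet ω ∩ L).card}) := measure_mono hincl
    _ ≤ ∑ L ∈ 𝓑 n, productBernoulli n p {ω | L.card ≤ 2 * (errSet ω ∩ L).card} :=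
        measure_biUnion_finset_le _ _
    _ ≤ ∑ _L ∈ 𝓑 n, ENNReal.ofReal (r ^ (K * (n : ℝ) ^ α)) := by
        refine Finset.sum_le_sum fun L hL => ?_
        refine (bad_measure hp0 hp.le L).trans ?_
        apply ENNReal.ofReal_le_ofReal
        calc (2 * s) ^ L.card ≤ r ^ L.card :=
              pow_le_pow_left₀ (by positivity) (le_max_left _ _) _
          _ = r ^ ((L.card : ℝ)) := (Real.rpow_natCast r L.card).symm
          _ ≤ r ^ (K * (n : ℝ) ^ α) :=
              Real.rpow_le_rpow_of_exponent_ge hr0 hr1.le (hcard n L hL)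
    _ = ((𝓑 n).card : ℝ≥0∞) * ENNReal.ofReal (r ^ (K * (n : ℝ) ^ α)) := by
        rw [Finset.sum_const, nsmul_eq_mul]
    _ ≤ (n : ℝ≥0∞) * ENNReal.ofReal (r ^ (K * (n : ℝ) ^ α)) := by
        exact mul_le_mul_left (by exact_mod_cast hBcard) _
    _ = ENNReal.ofReal ((n : ℝ) * r ^ (K * (n : ℝ) ^ α)) := by
        rw [ENNReal.ofReal_mul hn0.le, ENNReal.ofReal_natCast]
    _ ≤ ENNReal.ofReal (Real.exp (-c * (n : ℝ) ^ α)) := by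
        apply ENNReal.ofReal_le_ofReal
        have e1 : r ^ (K * (n : ℝ) ^ α) = Real.exp (Real.log r * (K * (n : ℝ) ^ α)) :=
          Real.rpow_def_of_pos hr0 _
        have hkey : Real.log n + Real.log r * (K * (n : ℝ) ^ α) ≤ -c * (n : ℝ) ^ α := by
          have h2c : Real.log r * K = -(2 * c) := by rw [hcdef]; ring
          have h3 : Real.log r * (K * (n : ℝ) ^ α) = -(2 * c) * (n : ℝ) ^ α := by
            rw [← mul_assoc, h2c]
          rw [h3]
          linarith
        calc (n : ℝ) * r ^ (K * (n : ℝ) ^ α)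
            = Real.exp (Real.log n + Real.log r * (K * (n : ℝ) ^ α)) := by
              rw [Real.exp_add, ← e1, Real.exp_log hn0]
          _ ≤ Real.exp (-c * (n : ℝ) ^ α) := Real.exp_le_exp.2 hkey
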